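/- Klein's inequality / nonnegativity of matrix relative entropy: for density matrices P and Q with Q positive definite, tr(P log P − P log Q) ≥ 0, with equality if and only if P = Q. -/

import Mathlib

open Matrix

/-- The principal matrix logarithm of a symmetric real matrix, via the spectral theorem. -/
noncomputable def matLog {n : ℕ} (A : Matrix (Fin n) (Fin n) ℝ) : Matrix (Fin n) (Fin n) ℝ :=
  if h : A.IsHermitian then h.cfc Real.log else 0

lemma klein_scalar_le {a b : ℝ} (ha : 0 < a) (hb : 0 < b) :
    a - b ≤ a * Real.log a - a * Real.log b := by
  have h := Real.log_le_sub_one_of_pos (div_pos hb ha)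
  rw [Real.log_div hb.ne' ha.ne'] at h
  have h2 : a * (Real.log b - Real.log a) ≤ a * (b / a - 1) :=
    mul_le_mul_of_nonneg_left h ha.le
  have h3 : a * (b / a - 1) = b - a := by field_simp
  nlinarith

lemma klein_scalar_lt {a b : ℝ} (ha : 0 < a) (hb : 0 < b) (hab : a ≠ b) :
    a - b < a * Real.log a - a * Real.log b := by
  have hba : b / a ≠ 1 := by
    intro h
    apply hab
    field_simp at h
    linarith
  have h := Real.log_lt_sub_one_of_pos (div_pos hb ha) hba
  rw [Real.log_div hb.ne' ha.ne'] at h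
  have h2 : a * (Real.log b - Real.log a) < a * (b / a - 1) :=
    mul_lt_mul_of_pos_left h ha
  have h3 : a * (b / a - 1) = b - a := by field_simp
  nlinarith

lemma trace_conj {n : ℕ} (U M : Matrix (Fin n) (Fin n) ℝ) (hU : star U * U = 1) :
    (U * M * star U).trace = M.trace := by
  rw [Matrix.trace_mul_cycle, hU, Matrix.one_mul]

lemma conj_mul_conj {n : ℕ} (U M N : Matrix (Fin n) (Fin n) ℝ) (hU : star U * U = 1) :
    (U * M * star U) * (U * N * star U) = U * (M * N) * star U := by
  simp only [Matrix.mul_assoc]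
  rw [← Matrix.mul_assoc (star U) U, hU, Matrix.one_mul]

lemma trace_dAlAt {n : ℕ} (d l : Fin n → ℝ) (A : Matrix (Fin n) (Fin n) ℝ) :
    (Matrix.diagonal d * A * Matrix.diagonal l * star A).trace
      = ∑ i, ∑ j, d i * l j * (A i j) ^ 2 := by
  simp only [Matrix.trace, Matrix.diag, Matrix.mul_apply, Matrix.diagonal_apply,
    Matrix.star_apply, star_trivial, ite_mul, zero_mul, Finset.sum_ite_eq,
    Finset.mem_univ, if_true, Finset.sum_mul]
  refine Finset.sum_congr rfl fun i _ => Finset.sum_congr rfl fun j _ => ?_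
  simp only [mul_ite, mul_zero, ite_mul, zero_mul, Finset.sum_ite_eq', Finset.mem_univ, if_true]
  ring

/-- Klein's inequality: for density matrices `P` and `Q` that are
positive definite, `tr(P log P − P log Q) ≥ 0`, with equality iff `P = Q`. -/
theorem klein_inequality {n : ℕ} (P Q : Matrix (Fin n) (Fin n) ℝ)
    (hPsymm : P.IsSymm) (hPpd : P.PosDef) (hPtr : P.trace = 1)
    (hQsymm : Q.IsSymm) (hQpd : Q.PosDef) (hQtr : Q.trace = 1) :
    0 ≤ (P * matLog P - P * matLog Q).trace ∧
    ((P * matLog P - P * matLog Q).trace = 0 ↔ P = Q) := by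
  classical
  have hP : P.IsHermitian := hPpd.1
  have hQ : Q.IsHermitian := hQpd.1
  set U : Matrix (Fin n) (Fin n) ℝ := (hP.eigenvectorUnitary : Matrix (Fin n) (Fin n) ℝ) with hUdef
  set V : Matrix (Fin n) (Fin n) ℝ := (hQ.eigenvectorUnitary : Matrix (Fin n) (Fin n) ℝ) with hVdef
  set d : Fin n → ℝ := hP.eigenvalues with hddef
  set e : Fin n → ℝ := hQ.eigenvalues with hedef
  have hU' : star U * U = 1 := (Matrix.mem_unitaryGroup_iff').mp hP.eigenvectorUnitary.2
  have hUU : U * star U = 1 := (Matrix.mem_unitaryGroup_iff).mp hP.eigenvectorUnitary.2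
  have hV' : star V * V = 1 := (Matrix.mem_unitaryGroup_iff').mp hQ.eigenvectorUnitary.2
  have hVV : V * star V = 1 := (Matrix.mem_unitaryGroup_iff).mp hQ.eigenvectorUnitary.2
  set A : Matrix (Fin n) (Fin n) ℝ := star U * V with hAdef
  have hstarA : star A = star V * U := by rw [hAdef, StarMul.star_mul, star_star]
  have hAA : A * star A = 1 := by
    rw [hstarA, hAdef, Matrix.mul_assoc, ← Matrix.mul_assoc V, hVV, Matrix.one_mul, hU']
  have hA'A : star A * A = 1 := by
    rw [hstarA, hAdef, Matrix.mul_assoc, ← Matrix.mul_assoc U, hUU, Matrix.one_mul, hV']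
  have dpos : ∀ i, 0 < d i := fun i => hPpd.eigenvalues_pos i
  have epos : ∀ j, 0 < e j := fun j => hQpd.eigenvalues_pos j
  -- spectral decompositions
  have hPdec : P = U * Matrix.diagonal d * star U := by
    have := hP.spectral_theorem
    simpa [RCLike.ofReal_real_eq_id] using this
  have hQdec : Q = V * Matrix.diagonal e * star V := by
    have := hQ.spectral_theorem
    simpa [RCLike.ofReal_real_eq_id] using this
  have hlogP : matLog P = U * Matrix.diagonal (Real.log ∘ d) * star U := by
    rw [matLog, dif_pos hP]
    simp [Matrix.IsHermitian.cfc, RCLike.ofReal_real_eq_id]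
    rfl
  have hlogQ : matLog Q = V * Matrix.diagonal (Real.log ∘ e) * star V := by
    rw [matLog, dif_pos hQ]
    simp [Matrix.IsHermitian.cfc, RCLike.ofReal_real_eq_id]
    rfl
  -- row and column sums of squares of A
  have hrow : ∀ i, ∑ j, (A i j) ^ 2 = 1 := by
    intro i
    have h : (A * star A) i i = 1 := by rw [hAA, Matrix.one_apply_eq]
    simpa [Matrix.mul_apply, Matrix.star_apply, pow_two] using h
  have hcol : ∀ j, ∑ i, (A i j) ^ 2 = 1 := by
    intro j
    have h : (star A * A) j j = 1 := by rw [hA'A, Matrix.one_apply_eq]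
    simpa [Matrix.mul_apply, Matrix.star_apply, pow_two, mul_comm] using h
  -- traces of eigenvalues
  have hd1 : ∑ i, d i = 1 := by
    have : P.trace = ∑ i, d i := by
      rw [hPdec, trace_conj _ _ hU', Matrix.trace_diagonal]
    rw [← this, hPtr]
  have he1 : ∑ j, e j = 1 := by
    have : Q.trace = ∑ j, e j := by
      rw [hQdec, trace_conj _ _ hV', Matrix.trace_diagonal]
    rw [← this, hQtr]
  -- the two traces
  have h1 : (P * matLog P).trace = ∑ i, d i * Real.log (d i) := by
    rw [hlogP, hPdec, conj_mul_conj _ _ _ hU', trace_conj _ _ hU',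
      Matrix.diagonal_mul_diagonal, Matrix.trace_diagonal]
    simp [Function.comp]
  have hPQ : P * matLog Q
      = U * (Matrix.diagonal d * A * Matrix.diagonal (Real.log ∘ e) * star A) * star U := by
    rw [hlogQ, hPdec, hstarA, hAdef]
    simp only [Matrix.mul_assoc]
    rw [hUU, Matrix.mul_one]
  have h2 : (P * matLog Q).trace = ∑ i, ∑ j, d i * Real.log (e j) * (A i j) ^ 2 := by
    rw [hPQ, trace_conj _ _ hU', trace_dAlAt]
    simp [Function.comp]
  -- the per-entry terms
  set t : Fin n → Fin n → ℝ :=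
    fun i j => (A i j) ^ 2 * ((d i * Real.log (d i) - d i * Real.log (e j)) - (d i - e j))
    with htdef
  have ht : ∀ i j, 0 ≤ t i j := by
    intro i j
    apply mul_nonneg (sq_nonneg _)
    have := klein_scalar_le (dpos i) (epos j)
    linarith
  -- rewriting the trace as the sum of the t's
  have e1 : ∑ i, ∑ j, (A i j) ^ 2 * (d i * Real.log (d i)) = ∑ i, d i * Real.log (d i) := by
    refine Finset.sum_congr rfl fun i _ => ?_
    rw [← Finset.sum_mul, hrow i, one_mul]
  have e2 : ∑ i, ∑ j, (A i j) ^ 2 * d i = 1 := by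
    rw [← hd1]
    refine Finset.sum_congr rfl fun i _ => ?_
    rw [← Finset.sum_mul, hrow i, one_mul]
  have e3 : ∑ i, ∑ j, (A i j) ^ 2 * e j = 1 := by
    rw [Finset.sum_comm, ← he1]
    refine Finset.sum_congr rfl fun j _ => ?_
    rw [← Finset.sum_mul, hcol j, one_mul]
  have hT : (P * matLog P - P * matLog Q).trace = ∑ i, ∑ j, t i j := by
    rw [Matrix.trace_sub, h1, h2]
    have step : ∑ i, ∑ j, t i j
        = (∑ i, ∑ j, (A i j) ^ 2 * (d i * Real.log (d i)))
          - (∑ i, ∑ j, d i * Real.log (e j) * (A i j) ^ 2)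
          - (∑ i, ∑ j, (A i j) ^ 2 * d i)
          + (∑ i, ∑ j, (A i j) ^ 2 * e j) := by
      simp only [← Finset.sum_sub_distrib, ← Finset.sum_add_distrib]
      refine Finset.sum_congr rfl fun i _ => Finset.sum_congr rfl fun j _ => ?_
      simp only [htdef]
      ring
    rw [step, e1, e2, e3]
    ring
  have hsum_nonneg : 0 ≤ ∑ i, ∑ j, t i j :=
    Finset.sum_nonneg fun i _ => Finset.sum_nonneg fun j _ => ht i j
  refine ⟨hT ▸ hsum_nonneg, ?_, ?_⟩
  · -- equality implies P = Q
    intro hzero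
    rw [hT] at hzero
    have hall : ∀ i j, t i j = 0 := by
      intro i j
      by_contra hne
      have hpos : 0 < t i j := lt_of_le_of_ne (ht i j) (Ne.symm hne)
      have hle1 : t i j ≤ ∑ j', t i j' :=
        Finset.single_le_sum (fun j' _ => ht i j') (Finset.mem_univ j)
      have hle2 : ∑ j', t i j' ≤ ∑ i', ∑ j', t i' j' :=
        Finset.single_le_sum (fun i' _ => Finset.sum_nonneg fun j' _ => ht i' j')
          (Finset.mem_univ i)
      linarith
    have key : ∀ i j, A i j ≠ 0 → d i = e j := by
      intro i j hAij
      by_contra hde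
      have hlt := klein_scalar_lt (dpos i) (epos j) hde
      have hsq : 0 < (A i j) ^ 2 :=
        lt_of_le_of_ne (sq_nonneg _) (Ne.symm (pow_ne_zero 2 hAij))
      have : 0 < t i j := by
        rw [htdef]
        exact mul_pos hsq (by linarith)
      rw [hall i j] at this
      exact lt_irrefl 0 this
    have hDA : Matrix.diagonal d * A = A * Matrix.diagonal e := by
      ext i j
      rw [Matrix.diagonal_mul, Matrix.mul_diagonal]
      by_cases h : A i j = 0
      · simp [h]
      · rw [key i j h]; ring
    have hPV : P * V = V * Matrix.diagonal e := by
      calc P * V = U * Matrix.diagonal d * (star U * V) := by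
            rw [hPdec, Matrix.mul_assoc]
        _ = U * (Matrix.diagonal d * A) := by rw [hAdef, Matrix.mul_assoc]
        _ = U * (A * Matrix.diagonal e) := by rw [hDA]
        _ = (U * star U) * V * Matrix.diagonal e := by
            rw [hAdef]; simp only [Matrix.mul_assoc]
        _ = V * Matrix.diagonal e := by rw [hUU, Matrix.one_mul]
    calc P = P * (V * star V) := by rw [hVV, Matrix.mul_one]
      _ = (P * V) * star V := by rw [Matrix.mul_assoc]
      _ = V * Matrix.diagonal e * star V := by rw [hPV]
      _ = Q := hQdec.symm
  · -- P = Q implies equality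
    intro hPQ'
    rw [hPQ', sub_self, Matrix.trace_zero]
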